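/- Let V be a finite-dimensional vector space over ℚ with an increasing filtration (C_i V)_{i ∈ ℕ} by subspaces such that C_i V = V for all sufficiently large i (set C_{-1} V = 0), and let ⟨−,−⟩ : V × V → ℚ be a perfect bilinear pairing. Assume there exists N > 0 such that: (i) ⟨v, w⟩ = 0 whenever v ∈ C_i V, w ∈ C_j V and i + j < N; and (ii) dim(C_i V / C_{i-1} V) = dim(C_{N-i} V / C_{N-i-1} V) for every i. Then the pairing descends to a well-defined pairing (C_i V / C_{i-1} V) × (C_{N-i} V / C_{N-i-1} V) → ℚ for every i, and this induced pairing is perfect. -/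

import Mathlib

/-!
Statement 0 (Lemma 1.6 of the paper, 'sym implies perfect'): a filtered finite-dimensional
vector space with a perfect pairing vanishing below total level `N` and symmetric graded
dimensions induces a well-defined perfect pairing on the associated graded pieces.

The filtration is indexed by `ℤ` (with `C i = 0` for `i < 0`, realizing the convention
`C_{-1} V = 0`), and the `i`-th graded piece is the quotient `C i ⧸ (C (i−1) ∩ C i)`.
A pairing is perfect when the induced map to the dual is bijective; for the induced graded
pairing, perfectness is expressed by nondegeneracy on both sides (equivalent, in finite
dimensions, to the induced maps to the duals being isomorphisms).
-/

/-- Auxiliary: the pairing `C i → Dual (C (N-i) ⧸ C (N-i-1))` induced by `B`. -/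
noncomputable def grF {V : Type*} [AddCommGroup V] [Module ℚ V]
    (C : ℤ → Submodule ℚ V) (B : V →ₗ[ℚ] V →ₗ[ℚ] ℚ) (N i : ℤ)
    (h2 : ∀ v ∈ C i, ∀ w ∈ C (N - i - 1), B v w = 0) :
    (C i) →ₗ[ℚ] (C (N - i) ⧸ Submodule.comap (C (N - i)).subtype (C (N - i - 1))) →ₗ[ℚ] ℚ where
  toFun v := Submodule.liftQ _ ((B v.1).comp (C (N - i)).subtype)
    (fun w hw => h2 v.1 v.2 w.1 hw)
  map_add' v₁ v₂ := by
    refine Submodule.linearMap_qext _ ?_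
    ext w
    simp
    rfl
  map_smul' c v := by
    refine Submodule.linearMap_qext _ ?_
    ext w
    simp
    exact Or.inl rfl

/-- Auxiliary: the induced graded pairing. -/
noncomputable def grB {V : Type*} [AddCommGroup V] [Module ℚ V]
    (C : ℤ → Submodule ℚ V) (B : V →ₗ[ℚ] V →ₗ[ℚ] ℚ) (N i : ℤ)
    (h1 : ∀ v ∈ C (i - 1), ∀ w ∈ C (N - i), B v w = 0)
    (h2 : ∀ v ∈ C i, ∀ w ∈ C (N - i - 1), B v w = 0) :
    (C i ⧸ Submodule.comap (C i).subtype (C (i - 1))) →ₗ[ℚ]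
      (C (N - i) ⧸ Submodule.comap (C (N - i)).subtype (C (N - i - 1))) →ₗ[ℚ] ℚ :=
  Submodule.liftQ _ (grF C B N i h2) (by
    intro v hv
    refine Submodule.linearMap_qext _ ?_
    ext w
    exact h1 v.1 hv w.1 w.2)

@[simp] theorem grB_mk_mk {V : Type*} [AddCommGroup V] [Module ℚ V]
    (C : ℤ → Submodule ℚ V) (B : V →ₗ[ℚ] V →ₗ[ℚ] ℚ) (N i : ℤ)
    (h1 : ∀ v ∈ C (i - 1), ∀ w ∈ C (N - i), B v w = 0)
    (h2 : ∀ v ∈ C i, ∀ w ∈ C (N - i - 1), B v w = 0)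
    (v : C i) (w : C (N - i)) :
    grB C B N i h1 h2 (Submodule.Quotient.mk v) (Submodule.Quotient.mk w) = B v.1 w.1 := by
  simp [grB, grF]
  rfl

theorem stmt0 (V : Type*) [AddCommGroup V] [Module ℚ V] [FiniteDimensional ℚ V]
    (C : ℤ → Submodule ℚ V) (hmono : Monotone C)
    (hneg : ∀ i : ℤ, i < 0 → C i = ⊥)
    (hexh : ∃ M : ℤ, ∀ i : ℤ, M ≤ i → C i = ⊤)
    (B : V →ₗ[ℚ] V →ₗ[ℚ] ℚ)
    (hperf : Function.Bijective fun v : V => B v)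
    (N : ℤ) (hN : 0 < N)
    (hvanish : ∀ i j : ℤ, i + j < N → ∀ v ∈ C i, ∀ w ∈ C j, B v w = 0)
    (hsym : ∀ i : ℤ,
      Module.finrank ℚ (C i ⧸ Submodule.comap (C i).subtype (C (i - 1)))
        = Module.finrank ℚ (C (N - i) ⧸ Submodule.comap (C (N - i)).subtype (C (N - i - 1)))) :
    ∃ Bgr : ∀ i : ℤ,
        (C i ⧸ Submodule.comap (C i).subtype (C (i - 1))) →ₗ[ℚ]
          (C (N - i) ⧸ Submodule.comap (C (N - i)).subtype (C (N - i - 1))) →ₗ[ℚ] ℚ,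
      (∀ (i : ℤ) (v : C i) (w : C (N - i)),
        Bgr i (Submodule.Quotient.mk v) (Submodule.Quotient.mk w) = B v w) ∧
      (∀ (i : ℤ) (x : C i ⧸ Submodule.comap (C i).subtype (C (i - 1))),
        (∀ y, Bgr i x y = 0) → x = 0) ∧
      (∀ (i : ℤ) (y : C (N - i) ⧸ Submodule.comap (C (N - i)).subtype (C (N - i - 1))),
        (∀ x, Bgr i x y = 0) → y = 0) := by
  classical
  obtain ⟨M, hM⟩ := hexh
  set d : ℤ → ℕ := fun i => Module.finrank ℚ (C i) with hd
  -- dimension bookkeeping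
  have hcom : ∀ i : ℤ,
      Module.finrank ℚ (Submodule.comap (C i).subtype (C (i - 1))) = d (i - 1) := by
    intro i
    exact LinearEquiv.finrank_eq (Submodule.comapSubtypeEquivOfLe (hmono (by omega)))
  have hq : ∀ i : ℤ,
      Module.finrank ℚ (C i ⧸ Submodule.comap (C i).subtype (C (i - 1))) + d (i - 1) = d i := by
    intro i
    rw [← hcom i]
    exact Submodule.finrank_quotient_add_finrank _
  have hstep : ∀ i : ℤ, d i + d (N - i - 1) = d (i - 1) + d (N - i) := by
    intro i
    have h1 := hq i
    have h2 := hq (N - i)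
    have h3 := hsym i
    omega
  have hconst : ∀ i : ℤ, d i + d (N - 1 - i) = Module.finrank ℚ V := by
    have hstep' : ∀ k : ℤ, d k + d (N - 1 - k) = d (k + 1) + d (N - 1 - (k + 1)) := by
      intro k
      have h := hstep (k + 1)
      have e1 : k + 1 - 1 = k := by ring
      have e2 : N - (k + 1) - 1 = N - 1 - (k + 1) := by ring
      have e3 : N - (k + 1) = N - 1 - k := by ring
      rw [e1, e2, e3] at h
      omega
    have hmcn : ∀ n : ℕ, ∀ a : ℤ, d a + d (N - 1 - a) = d (a + n) + d (N - 1 - (a + n)) := by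
      intro n
      induction n with
      | zero => intro a; norm_num
      | succ n ih =>
        intro a
        have h := hstep' (a + n)
        have e : (a + n) + 1 = a + (n + 1 : ℕ) := by push_cast; ring
        rw [e] at h
        rw [ih a, h]
    have hmc : ∀ a b : ℤ, a ≤ b → d a + d (N - 1 - a) = d b + d (N - 1 - b) := by
      intro a b hab
      obtain ⟨n, rfl⟩ := Int.le.dest hab
      exact hmcn n a
    intro i
    set b : ℤ := min (min i (-1)) (N - 1 - M) with hb
    have h1 : d b = 0 := by
      have hcb : C b = ⊥ := hneg b (by omega)
      simp [hd, hcb]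
    have h2 : d (N - 1 - b) = Module.finrank ℚ V := by
      have hct : C (N - 1 - b) = ⊤ := hM _ (by omega)
      show Module.finrank ℚ (C (N - 1 - b)) = Module.finrank ℚ V
      rw [hct]
      exact finrank_top ℚ V
    have h3 := hmc b i (by omega)
    omega
  -- flip is also bijective
  have hperf' : Function.Bijective (⇑B : V → Module.Dual ℚ V) := hperf
  have hflip : Function.Bijective (⇑B.flip : V → Module.Dual ℚ V) := by
    have hinj : Function.Injective (⇑B.flip : V → Module.Dual ℚ V) := by
      rw [injective_iff_map_eq_zero]
      intro w hw
      rw [← Module.forall_dual_apply_eq_zero_iff ℚ w]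
      intro φ
      obtain ⟨v, rfl⟩ := hperf'.2 φ
      have := congrArg (fun f => f v) hw
      simpa using this
    exact ⟨hinj, (LinearMap.injective_iff_surjective_of_finrank_eq_finrank
      Subspace.dual_finrank_eq.symm).mp hinj⟩
  -- key orthogonality lemma
  have key : ∀ P : V →ₗ[ℚ] Module.Dual ℚ V, Function.Bijective ⇑P →
      ∀ W W' : Submodule ℚ V, (∀ v ∈ W', ∀ w ∈ W, P v w = 0) →
      Module.finrank ℚ W' + Module.finrank ℚ W = Module.finrank ℚ V →
      ∀ v : V, (∀ w ∈ W, P v w = 0) → v ∈ W' := by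
    intro P hP W W' hle hdim v hv
    set e : V ≃ₗ[ℚ] Module.Dual ℚ V := LinearEquiv.ofBijective P hP with he
    set Wp : Submodule ℚ V := W.dualAnnihilator.comap (e : V →ₗ[ℚ] Module.Dual ℚ V) with hWp
    have hvW : v ∈ Wp := by
      simp only [hWp, Submodule.mem_comap, Submodule.mem_dualAnnihilator]
      exact hv
    have hW'le : W' ≤ Wp := by
      intro x hx
      simp only [hWp, Submodule.mem_comap, Submodule.mem_dualAnnihilator]
      exact hle x hx
    have hrk : Module.finrank ℚ Wp = Module.finrank ℚ W' := by
      have e2 : Module.finrank ℚ Wp = Module.finrank ℚ W.dualAnnihilator := by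
        rw [hWp, Submodule.comap_equiv_eq_map_symm]
        exact (LinearEquiv.finrank_map_eq e.symm _)
      have e3 : Module.finrank ℚ W.dualAnnihilator = Module.finrank ℚ (V ⧸ W) :=
        (LinearEquiv.finrank_eq (Subspace.quotEquivAnnihilator W)).symm
      have e4 := Submodule.finrank_quotient_add_finrank W
      omega
    have : W' = Wp := Submodule.eq_of_le_of_finrank_eq hW'le hrk.symm
    rw [this]
    exact hvW
  -- the two vanishing conditions needed for well-definedness
  have h1 : ∀ i : ℤ, ∀ v ∈ C (i - 1), ∀ w ∈ C (N - i), B v w = 0 := by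
    intro i v hv w hw
    exact hvanish (i - 1) (N - i) (by omega) v hv w hw
  have h2 : ∀ i : ℤ, ∀ v ∈ C i, ∀ w ∈ C (N - i - 1), B v w = 0 := by
    intro i v hv w hw
    exact hvanish i (N - i - 1) (by omega) v hv w hw
  refine ⟨fun i => grB C B N i (h1 i) (h2 i), ?_, ?_, ?_⟩
  · intro i v w
    exact grB_mk_mk C B N i (h1 i) (h2 i) v w
  · -- left nondegeneracy
    intro i x hx
    obtain ⟨v, rfl⟩ := Submodule.Quotient.mk_surjective _ x
    rw [Submodule.Quotient.mk_eq_zero]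
    have hdim : Module.finrank ℚ (C (i - 1)) + Module.finrank ℚ (C (N - i)) =
        Module.finrank ℚ V := by
      have h := hconst (i - 1)
      have e : N - 1 - (i - 1) = N - i := by ring
      rw [e] at h
      simp only [hd] at h
      omega
    have hv : ∀ w ∈ C (N - i), B v.1 w = 0 := by
      intro w hw
      have := hx (Submodule.Quotient.mk ⟨w, hw⟩)
      rwa [grB_mk_mk] at this
    exact key B hperf' (C (N - i)) (C (i - 1)) (h1 i) hdim v.1 hv
  · -- right nondegeneracy
    intro i y hy
    obtain ⟨w, rfl⟩ := Submodule.Quotient.mk_surjective _ y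
    rw [Submodule.Quotient.mk_eq_zero]
    have hdim : Module.finrank ℚ (C (N - i - 1)) + Module.finrank ℚ (C i) =
        Module.finrank ℚ V := by
      have h := hconst (N - i - 1)
      have e : N - 1 - (N - i - 1) = i := by ring
      rw [e] at h
      simp only [hd] at h
      omega
    have hle : ∀ v ∈ C (N - i - 1), ∀ u ∈ C i, B.flip v u = 0 := by
      intro v hv u hu
      exact hvanish i (N - i - 1) (by omega) u hu v hv
    have hw : ∀ u ∈ C i, B.flip w.1 u = 0 := by
      intro u hu
      have := hy (Submodule.Quotient.mk ⟨u, hu⟩)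
      rwa [grB_mk_mk] at this
    exact key B.flip hflip (C i) (C (N - i - 1)) hle hdim w.1 hw
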